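/- Let q(x) = (q_n(x))_{n≥0} be a binomial type sequence over a commutative ℚ-algebra R, with q_n(x) = ∑_{i=1}^{n} c_{i,n} x^i for n ≥ 1. Let u ∈ H_R be the unique sequence with τ(x·u) = q(x), where τ is the isomorphism from (H_{R[x]}, +) to the group of sequences starting with 1 under the binomial convolution ⋆ built from the basis b^{(k)}. Then u_0 = c_{1,1} and for all m ≥ 2, u_{m-1} = c_{1,m} + ∑_{k | m, k ≠ 1, k ≠ m} ((-1)^{m/k} · m! / ((m/k) · (k!)^{m/k})) · u_{k-1}. -/

import Mathlib

/-- The binomial convolution (Hurwitz) product of sequences. -/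
def hmul {R : Type*} [CommRing R] (a b : ℕ → R) : ℕ → R :=
  fun n => ∑ h ∈ Finset.range (n + 1), (n.choose h : R) * a h * b (n - h)

/-- The identity sequence `(1,0,0,...)`. -/
def hone {R : Type*} [CommRing R] : ℕ → R := fun n => if n = 0 then 1 else 0

/-- The binomial-type polynomial sequence `p^{(b⁽ᵏ⁾)}(y)` attached to the basis
sequence `b⁽ᵏ⁾` (which is `(1,1,1,...)` for `k = 1`, and has `1` in positions `0`
and `k` and `0` elsewhere for `k ≥ 2`), evaluated at `y`:
its e.g.f. is `(e.g.f. of b⁽ᵏ⁾)^y`. -/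
noncomputable def Pseq {R : Type*} [CommRing R] [Algebra ℚ R] (k : ℕ) (y : Polynomial R) :
    ℕ → Polynomial R := fun n =>
  if k = 1 then y ^ n
  else if k ∣ n then
    Polynomial.C (algebraMap ℚ R
        (n.factorial / ((n / k).factorial * (k.factorial : ℚ) ^ (n / k)))) *
      ∏ h ∈ Finset.range (n / k), (y - (h : Polynomial R))
  else 0

/-- The `⋆`-product `f(1) ⋆ f(2) ⋆ ⋯ ⋆ f(m)` of a family of sequences. -/
def hprod {R : Type*} [CommRing R] : ℕ → (ℕ → ℕ → R) → ℕ → R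
  | 0, _ => hone
  | m + 1, f => hmul (f (m + 1)) (hprod m f)

section Aux

open Polynomial

variable {R : Type*} [CommRing R] [Algebra ℚ R]

lemma Pseq_zero (k : ℕ) (y : Polynomial R) : Pseq k y 0 = 1 := by
  unfold Pseq
  split
  · simp
  · simp

lemma Pseq_coeff_zero (u : R) {k n : ℕ} (hn : 0 < n) :
    (Pseq k (C u * X) n).coeff 0 = 0 := by
  unfold Pseq
  rcases eq_or_ne k 1 with rfl | hk
  · rw [if_pos rfl, mul_pow, ← C_pow, coeff_C_mul, coeff_X_pow, if_neg (by omega), mul_zero]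
  rw [if_neg hk]
  by_cases hkn : k ∣ n
  · rw [if_pos hkn]
    have hkpos : 0 < k := Nat.pos_of_ne_zero (by rintro rfl; exact hn.ne' (Nat.eq_zero_of_zero_dvd hkn))
    have htpos : 0 < n / k := Nat.div_pos (Nat.le_of_dvd hn hkn) hkpos
    rw [coeff_zero_eq_eval_zero, eval_mul, eval_prod]
    rw [Finset.prod_eq_zero (Finset.mem_range.2 htpos)]
    · ring
    · simp
  · rw [if_neg hkn]; simp

lemma Pseq_one_coeff_one (u : R) (n : ℕ) :
    (Pseq 1 (C u * X) n).coeff 1 = if n = 1 then u else 0 := by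
  unfold Pseq
  rw [if_pos rfl, mul_pow, ← C_pow, coeff_C_mul, coeff_X_pow]
  rcases eq_or_ne n 1 with rfl | hn
  · simp
  · rw [if_neg (by omega), mul_zero, if_neg hn]

lemma Pseq_coeff_one_not_dvd (u : R) {k n : ℕ} (hk : k ≠ 1) (hkn : ¬ k ∣ n) :
    (Pseq k (C u * X) n).coeff 1 = 0 := by
  unfold Pseq
  rw [if_neg hk, if_neg hkn]
  simp

omit [Algebra ℚ R] in
lemma prod_neg_succ (s : ℕ) :
    ∏ h ∈ Finset.range s, (-((h + 1 : ℕ) : R)) = (-1) ^ s * (s.factorial : R) := by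
  induction s with
  | zero => simp
  | succ s ih => rw [Finset.prod_range_succ, ih, Nat.factorial_succ]; push_cast; ring

lemma Pseq_coeff_one_dvd (u : R) {k n : ℕ} (hk : k ≠ 1) (hkn : k ∣ n) (hn : 0 < n) :
    (Pseq k (C u * X) n).coeff 1 =
      -(algebraMap ℚ R ((-1 : ℚ) ^ (n / k) * n.factorial /
          (((n / k : ℕ) : ℚ) * (k.factorial : ℚ) ^ (n / k))) * u) := by
  have hkpos : 0 < k := Nat.pos_of_ne_zero (by rintro rfl; exact hn.ne' (Nat.eq_zero_of_zero_dvd hkn))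
  have htpos : 0 < n / k := Nat.div_pos (Nat.le_of_dvd hn hkn) hkpos
  obtain ⟨s, hs⟩ : ∃ s, n / k = s + 1 := ⟨n / k - 1, (Nat.succ_pred_eq_of_pos htpos).symm⟩
  unfold Pseq
  rw [if_neg hk, if_pos hkn, hs]
  rw [Finset.prod_range_succ']
  simp only [Nat.cast_zero, sub_zero]
  rw [show (∏ h ∈ Finset.range s, (C u * X - ((h + 1 : ℕ) : Polynomial R))) * (C u * X)
      = ((∏ h ∈ Finset.range s, (C u * X - ((h + 1 : ℕ) : Polynomial R))) * C u) * X by ring,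
    coeff_C_mul, show (1:ℕ) = 0 + 1 from rfl, coeff_mul_X, mul_coeff_zero, coeff_C,
    if_pos rfl, coeff_zero_eq_eval_zero, eval_prod]
  simp only [eval_sub, eval_mul, eval_C, eval_X, mul_zero, zero_sub, eval_natCast]
  rw [prod_neg_succ]
  have h1 : ((-1 : R)) ^ s * ((s.factorial : R)) =
      algebraMap ℚ R ((-1 : ℚ) ^ s * (s.factorial : ℚ)) := by
    rw [map_mul, map_pow, map_neg, map_one, map_natCast]
  rw [mul_assoc, ← mul_assoc ((-1:R)^s), h1, ← mul_assoc, ← map_mul, ← neg_mul, ← map_neg]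
  congr 1
  have hsf : (s.factorial : ℚ) ≠ 0 := Nat.cast_ne_zero.2 s.factorial_ne_zero
  have hkf : ((k.factorial : ℚ)) ^ (s + 1) ≠ 0 := pow_ne_zero _ (Nat.cast_ne_zero.2 k.factorial_ne_zero)
  have hs1 : ((s : ℚ) + 1) ≠ 0 := by positivity
  congr 1
  simp only [Nat.zero_add, Nat.factorial_succ]
  push_cast
  field_simp
  ring

omit [Algebra ℚ R] in
lemma coeff_one_mul' (a b : Polynomial R) :
    (a * b).coeff 1 = a.coeff 0 * b.coeff 1 + a.coeff 1 * b.coeff 0 := by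
  rw [Polynomial.coeff_mul, Finset.Nat.sum_antidiagonal_eq_sum_range_succ_mk]
  simp [Finset.sum_range_succ]

variable (f : ℕ → ℕ → Polynomial R)

omit [Algebra ℚ R] in
lemma hprod_coeff_zero (hf0 : ∀ k, f k 0 = 1) (hfc0 : ∀ k n, 0 < n → (f k n).coeff 0 = 0) :
    ∀ m n, (hprod m f n).coeff 0 = if n = 0 then 1 else 0 := by
  intro m
  induction m with
  | zero => intro n; show ((hone : ℕ → Polynomial R) n).coeff 0 = _; unfold hone; split <;> simp
  | succ m ih =>
    intro n
    show (hmul (f (m+1)) (hprod m f) n).coeff 0 = _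
    unfold hmul
    rw [finset_sum_coeff]
    rcases Nat.eq_zero_or_pos n with rfl | hn
    · simp [hf0, ih]
    · rw [if_neg hn.ne']
      apply Finset.sum_eq_zero
      intro h _
      rcases Nat.eq_zero_or_pos h with rfl | hpos
      · simp [mul_coeff_zero, ih, hn.ne']
      · simp [mul_coeff_zero, hfc0 _ _ hpos]

omit [Algebra ℚ R] in
lemma hprod_coeff_one (hf0 : ∀ k, f k 0 = 1) (hfc0 : ∀ k n, 0 < n → (f k n).coeff 0 = 0) :
    ∀ m n, 1 ≤ n → (hprod m f n).coeff 1 = ∑ k ∈ Finset.range m, (f (k+1) n).coeff 1 := by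
  intro m
  induction m with
  | zero =>
    intro n hn
    show ((hone : ℕ → Polynomial R) n).coeff 1 = _
    unfold hone
    rw [if_neg (by omega)]
    simp
  | succ m ih =>
    intro n hn
    show (hmul (f (m+1)) (hprod m f) n).coeff 1 = _
    unfold hmul
    rw [finset_sum_coeff]
    have key : ∀ h ∈ Finset.range (n+1),
        ((n.choose h : Polynomial R) * f (m+1) h * hprod m f (n-h)).coeff 1 =
        (if h = 0 then (hprod m f n).coeff 1 else 0) +
          (if h = n then (f (m+1) n).coeff 1 else 0) := by
      intro h hh
      rw [mul_assoc, ← C_eq_natCast, coeff_C_mul, coeff_one_mul']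
      rcases eq_or_ne h 0 with rfl | h0
      · rw [if_pos rfl, if_neg (by omega), hf0, Nat.sub_zero]
        simp [hprod_coeff_zero f hf0 hfc0 m n, (by omega : ¬ n = 0), Polynomial.coeff_one]
      · rcases eq_or_ne h n with rfl | hn'
        · rw [if_neg h0, if_pos rfl, Nat.sub_self]
          simp [hfc0 _ _ (Nat.pos_of_ne_zero h0), hprod_coeff_zero f hf0 hfc0 m 0]
        · rw [if_neg h0, if_neg hn']
          have hlt : ¬ (n - h = 0) := by
            have := Finset.mem_range.1 hh; omega
          rw [hfc0 _ _ (Nat.pos_of_ne_zero h0), hprod_coeff_zero f hf0 hfc0, if_neg hlt]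
          ring
    rw [Finset.sum_congr rfl key, Finset.sum_add_distrib,
      Finset.sum_ite_eq' (Finset.range (n+1)) 0, Finset.sum_ite_eq' (Finset.range (n+1)) n,
      if_pos (by simp), if_pos (by simp), ih n hn, Finset.sum_range_succ]

end Aux

open MvPolynomial in
/-- If `q` is a binomial type sequence with `q_n(x) = ∑_{i=1}^n c_{i,n} xⁱ` and `u` is
the sequence with `τ(x·u) = q(x)`, then `u₀ = c_{1,1}` and for `m ≥ 2`,
`u_{m-1} = c_{1,m} + ∑_{k ∣ m, k ≠ 1, m} ((-1)^{m/k} m! / ((m/k)(k!)^{m/k})) u_{k-1}`. -/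
theorem binomial_type_u_recursion {R : Type*} [CommRing R] [Algebra ℚ R]
    (q : ℕ → Polynomial R) (u : ℕ → R) (hq0 : q 0 = 1)
    (hq : ∀ n : ℕ,
      Polynomial.aeval (X 0 + X 1 : MvPolynomial (Fin 2) R) (q n) =
        ∑ h ∈ Finset.range (n + 1), (n.choose h : MvPolynomial (Fin 2) R) *
          Polynomial.aeval (X 0 : MvPolynomial (Fin 2) R) (q h) *
          Polynomial.aeval (X 1 : MvPolynomial (Fin 2) R) (q (n - h)))
    (htau : ∀ m : ℕ,
      hprod m (fun k => Pseq k (Polynomial.C (u (k - 1)) * Polynomial.X)) m = q m) :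
    u 0 = (q 1).coeff 1 ∧
    ∀ m : ℕ, 2 ≤ m →
      u (m - 1) = (q m).coeff 1 +
        ∑ k ∈ (m.divisors.erase 1).erase m,
          algebraMap ℚ R ((-1 : ℚ) ^ (m / k) * m.factorial /
            (((m / k : ℕ) : ℚ) * (k.factorial : ℚ) ^ (m / k))) * u (k - 1) := by
  classical
  set f : ℕ → ℕ → Polynomial R :=
    fun k => Pseq k (Polynomial.C (u (k - 1)) * Polynomial.X) with hfdef
  have hf0 : ∀ k, f k 0 = 1 := fun k => Pseq_zero _ _
  have hfc0 : ∀ k n, 0 < n → (f k n).coeff 0 = 0 := fun k n hn => Pseq_coeff_zero _ hn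
  have hco : ∀ m : ℕ, 1 ≤ m →
      (q m).coeff 1 = ∑ k ∈ Finset.range m, (f (k + 1) m).coeff 1 := by
    intro m hm
    rw [← htau m]
    exact hprod_coeff_one f hf0 hfc0 m m hm
  constructor
  · rw [hco 1 le_rfl, Finset.sum_range_one]
    have h11 : (f (0 + 1) 1).coeff 1 = u 0 := by
      rw [hfdef]
      simp only []
      rw [show (0:ℕ) + 1 = 1 from rfl, Pseq_one_coeff_one, if_pos rfl]
    rw [h11]
  · intro m hm
    have hm0 : m ≠ 0 := by omega
    have hm1 : m ≠ 1 := by omega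
    have hmpos : 0 < m := by omega
    have step1 : ∑ k ∈ Finset.range m, (f (k + 1) m).coeff 1
        = ∑ d ∈ Finset.Icc 1 m, (f d m).coeff 1 := by
      rw [← Finset.Ico_add_one_right_eq_Icc, Finset.sum_Ico_eq_sum_range,
        show m + 1 - 1 = m from rfl]
      exact Finset.sum_congr rfl fun k _ => by rw [Nat.add_comm]
    have step2 : ∑ d ∈ Finset.Icc 1 m, (f d m).coeff 1
        = ∑ d ∈ m.divisors, (f d m).coeff 1 := by
      symm
      apply Finset.sum_subset
      · intro d hd
        exact Finset.mem_Icc.2 ⟨Nat.pos_of_mem_divisors hd,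
          Nat.le_of_dvd hmpos (Nat.mem_divisors.1 hd).1⟩
      · intro d _ hnd
        have hdvd : ¬ d ∣ m := fun h => hnd (Nat.mem_divisors.2 ⟨h, hm0⟩)
        have hd1 : d ≠ 1 := by rintro rfl; exact hdvd (one_dvd m)
        rw [hfdef]
        simp only []
        exact Pseq_coeff_one_not_dvd _ hd1 hdvd
    have hmmem : m ∈ m.divisors := Nat.mem_divisors_self m hm0
    have h1mem : (1:ℕ) ∈ m.divisors.erase m :=
      Finset.mem_erase.2 ⟨by omega, Nat.one_mem_divisors.2 hm0⟩
    have step3 : ∑ d ∈ m.divisors, (f d m).coeff 1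
        = (f m m).coeff 1 + ∑ d ∈ m.divisors.erase m, (f d m).coeff 1 :=
      (Finset.add_sum_erase _ _ hmmem).symm
    have step4 : ∑ d ∈ m.divisors.erase m, (f d m).coeff 1
        = (f 1 m).coeff 1 + ∑ d ∈ (m.divisors.erase m).erase 1, (f d m).coeff 1 :=
      (Finset.add_sum_erase _ _ h1mem).symm
    have hfm : (f m m).coeff 1 = u (m - 1) := by
      rw [hfdef]
      simp only []
      rw [Pseq_coeff_one_dvd _ hm1 dvd_rfl hmpos, Nat.div_self hmpos]
      have hmf : ((m.factorial : ℚ)) ≠ 0 := Nat.cast_ne_zero.2 m.factorial_ne_zero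
      rw [pow_one, pow_one, show (-1 : ℚ) * (m.factorial : ℚ) / (((1:ℕ) : ℚ) * (m.factorial : ℚ)) = -1 by
        field_simp; norm_num]
      simp
    have hf1 : (f 1 m).coeff 1 = 0 := by
      rw [hfdef]
      simp only []
      rw [Pseq_one_coeff_one, if_neg hm1]
    have step5 : ∑ d ∈ (m.divisors.erase m).erase 1, (f d m).coeff 1
        = ∑ d ∈ (m.divisors.erase 1).erase m,
            -(algebraMap ℚ R ((-1 : ℚ) ^ (m / d) * m.factorial /
              (((m / d : ℕ) : ℚ) * (d.factorial : ℚ) ^ (m / d))) * u (d - 1)) := by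
      rw [Finset.erase_right_comm]
      apply Finset.sum_congr rfl
      intro d hd
      have hd1 : d ≠ 1 := by
        have := Finset.mem_erase.1 (Finset.mem_of_mem_erase hd); exact this.1
      have hdvd : d ∣ m := (Nat.mem_divisors.1
        (Finset.mem_of_mem_erase (Finset.mem_of_mem_erase hd))).1
      rw [hfdef]
      simp only []
      exact Pseq_coeff_one_dvd _ hd1 hdvd hmpos
    rw [hco m (by omega), step1, step2, step3, step4, hfm, hf1, step5, zero_add]
    rw [Finset.sum_neg_distrib]
    ring
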